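/- Let Σ ∈ ℝ^{d×d} be a nonzero symmetric positive semidefinite matrix, let α > 0, and set ρ² = 3‖Σ‖_F² (r(Σ)² + α r(Σ²)). Then min{ 2ρ²/‖Σ‖_F², (ρ² − (Tr Σ)²)² / (‖Σ‖_F⁴ + ‖Σ‖²(ρ² − (Tr Σ)²)) } ≥ r(Σ)² + (α − 1) r(Σ²). -/

import Mathlib

open MeasureTheory ProbabilityTheory Matrix

noncomputable section

/-- The quadratic form `xᵀ U x`. -/
def qf {d : ℕ} (U : Matrix (Fin d) (Fin d) ℝ) (x : Fin d → ℝ) : ℝ :=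
  ∑ i, ∑ j, x i * U i j * x j

/-- The Frobenius norm of a matrix. -/
def frob {d : ℕ} (A : Matrix (Fin d) (Fin d) ℝ) : ℝ :=
  Real.sqrt (∑ i, ∑ j, (A i j) ^ 2)

/-- The operator (spectral) norm of a matrix. -/
def opNorm {d : ℕ} (A : Matrix (Fin d) (Fin d) ℝ) : ℝ :=
  ‖Matrix.toEuclideanCLM (𝕜 := ℝ) A‖

/-- The effective rank `r(A) = Tr(A) / ‖A‖`. -/
def effRank {d : ℕ} (A : Matrix (Fin d) (Fin d) ℝ) : ℝ :=
  A.trace / opNorm A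

/-- The tilted expectation `P_U f = E[f e^{ξᵀUξ}] / E[e^{ξᵀUξ}]`. -/
def tExp {Ω : Type*} [MeasurableSpace Ω] (μ : Measure Ω) {d : ℕ}
    (ξ : Ω → Fin d → ℝ) (U : Matrix (Fin d) (Fin d) ℝ) (f : Ω → ℝ) : ℝ :=
  (∫ ω, f ω * Real.exp (qf U (ξ ω)) ∂μ) / ∫ ω, Real.exp (qf U (ξ ω)) ∂μ

/-- Assumption A1: `P_U (ξᵀVξ - P_U ξᵀVξ)⁴ ≤ τ² ‖V‖_F⁴` whenever `‖U‖_F ≤ ρmax`. -/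
def AssumptionA1 {Ω : Type*} [MeasurableSpace Ω] (μ : Measure Ω) {d : ℕ}
    (ξ : Ω → Fin d → ℝ) (τ ρmax : ℝ) : Prop :=
  ∀ U V : Matrix (Fin d) (Fin d) ℝ, frob U ≤ ρmax →
    tExp μ ξ U (fun ω => (qf V (ξ ω) - tExp μ ξ U fun ω' => qf V (ξ ω')) ^ 4)
      ≤ τ ^ 2 * frob V ^ 4

/-- Assumption A2: `E (ξᵀVξ - E ξᵀVξ)⁴ ≤ α² ‖V‖_F⁴`. -/
def AssumptionA2 {Ω : Type*} [MeasurableSpace Ω] (μ : Measure Ω) {d : ℕ}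
    (ξ : Ω → Fin d → ℝ) (α : ℝ) : Prop :=
  ∀ V : Matrix (Fin d) (Fin d) ℝ,
    ∫ ω, (qf V (ξ ω) - ∫ ω', qf V (ξ ω') ∂μ) ^ 4 ∂μ ≤ α ^ 2 * frob V ^ 4

/-- The sample covariance matrix `(1/n) ∑ᵢ Xᵢ Xᵢᵀ`. -/
def sampleCov {Ω : Type*} {d n : ℕ} (Xs : Fin n → Ω → Fin d → ℝ) (ω : Ω) :
    Matrix (Fin d) (Fin d) ℝ :=
  (n : ℝ)⁻¹ • ∑ i, Matrix.vecMulVec (Xs i ω) (Xs i ω)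

/-- `v² = ‖E[vec(XXᵀ - Σ) vec(XXᵀ - Σ)ᵀ]‖_F²`, written entrywise. -/
def vsq {Ω : Type*} [MeasurableSpace Ω] (μ : Measure Ω) {d : ℕ}
    (X : Ω → Fin d → ℝ) (Sig : Matrix (Fin d) (Fin d) ℝ) : ℝ :=
  ∑ i, ∑ j, ∑ k, ∑ l,
    (∫ ω, (X ω i * X ω j - Sig i j) * (X ω k * X ω l - Sig k l) ∂μ) ^ 2

/-- `κ = sup_{‖U‖_F = 1} E[XᵀUX - Tr(UᵀΣ)]²`. -/
def kap {Ω : Type*} [MeasurableSpace Ω] (μ : Measure Ω) {d : ℕ}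
    (X : Ω → Fin d → ℝ) (Sig : Matrix (Fin d) (Fin d) ℝ) : ℝ :=
  sSup {x : ℝ | ∃ U : Matrix (Fin d) (Fin d) ℝ, frob U = 1 ∧
    x = ∫ ω, (qf U (X ω) - (Uᵀ * Sig).trace) ^ 2 ∂μ}

/-- The Orlicz `ψ₁`-norm with respect to the tilted measure `P_U`
(`U = 0` gives the ordinary `ψ₁`-norm). -/
def psi1T {Ω : Type*} [MeasurableSpace Ω] (μ : Measure Ω) {d : ℕ}
    (ξ : Ω → Fin d → ℝ) (U : Matrix (Fin d) (Fin d) ℝ) (f : Ω → ℝ) : ℝ :=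
  sInf {t : ℝ | 0 < t ∧
    ∫⁻ ω, ENNReal.ofReal (Real.exp (|f ω| / t) * Real.exp (qf U (ξ ω))) ∂μ
      ≤ 2 * ∫⁻ ω, ENNReal.ofReal (Real.exp (qf U (ξ ω))) ∂μ}

/-- `Xs` is a sample of i.i.d. copies of `X`. -/
def IsIIDSample {Ω : Type*} [MeasurableSpace Ω] (μ : Measure Ω) {d n : ℕ}
    (X : Ω → Fin d → ℝ) (Xs : Fin n → Ω → Fin d → ℝ) : Prop :=
  iIndepFun Xs μ ∧
    ∀ i, Measure.map (Xs i) μ = Measure.map X μ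

/-- `Γ` is a `d × d` random matrix with i.i.d. standard Gaussian entries. -/
def IsStdGaussianMatrix {Ω : Type*} [MeasurableSpace Ω] (μ : Measure Ω) {d : ℕ}
    (Γ : Ω → Fin d → Fin d → ℝ) : Prop :=
  iIndepFun (fun p : Fin d × Fin d => fun ω => Γ ω p.1 p.2) μ ∧
    ∀ i j, Measure.map (fun ω => Γ ω i j) μ = gaussianReal 0 1

/-- The complex tilted expectation `P_{iU} f = E[f e^{i ξᵀUξ}] / E[e^{i ξᵀUξ}]`. -/
def ctExp {Ω : Type*} [MeasurableSpace Ω] (μ : Measure Ω) {d : ℕ}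
    (ξ : Ω → Fin d → ℝ) (U : Matrix (Fin d) (Fin d) ℝ) (f : Ω → ℂ) : ℂ :=
  (∫ ω, f ω * Complex.exp (Complex.I * (qf U (ξ ω) : ℂ)) ∂μ) /
    ∫ ω, Complex.exp (Complex.I * (qf U (ξ ω) : ℂ)) ∂μ


lemma key_ineq_aux (a b α : ℝ) (hb : 1 ≤ b) (hab : b ≤ a) (hα : 0 < α) :
    a + (α - 1) * b ≤ (3*b*(a + α*b) - a)^2 / (b^2 + (3*b*(a + α*b) - a)) := by
  have ha : 1 ≤ a := le_trans hb hab
  have hden : 0 < b^2 + (3*b*(a + α*b) - a) := by nlinarith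
  rw [le_div_iff₀ hden]
  have h1 : b^2 ≤ (3*b*(a + α*b) - a) - (a + (α - 1) * b) := by
    nlinarith [mul_le_mul_of_nonneg_right hab (by linarith : (0:ℝ) ≤ b),
      mul_nonneg (by linarith : (0:ℝ) ≤ a) (by linarith : (0:ℝ) ≤ 2*b - 2),
      mul_nonneg hα.le (by nlinarith : (0:ℝ) ≤ 3*b^2 - b)]
  have h2 : a + (α - 1) * b ≤ 3*b*(a + α*b) - a := by nlinarith [sq_nonneg b]
  rcases le_or_gt (a + (α - 1) * b) 0 with h|h
  · nlinarith [mul_nonpos_of_nonpos_of_nonneg h hden.le]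
  · nlinarith [mul_le_mul_of_nonneg_left h1 h.le,
      sq_nonneg ((3*b*(a + α*b) - a) - (a + (α - 1) * b))]

lemma lift_ineq_aux (N F T α : ℝ) (hN : 0 < N) (hF : 0 < F) (hNF : N ≤ F) (hFT : F ≤ T)
    (hα : 0 < α) :
    T^2/N^2 + (α-1)*(F^2/N^2) ≤
      (3*F^2*(T^2/N^2 + α*(F^2/N^2)) - T^2)^2 /
        (F^4 + N^2*(3*F^2*(T^2/N^2 + α*(F^2/N^2)) - T^2)) := by
  have hNe : N ≠ 0 := hN.ne'
  have hb : 1 ≤ F^2/N^2 := by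
    rw [le_div_iff₀ (by positivity)]
    nlinarith
  have hab : F^2/N^2 ≤ T^2/N^2 := by
    apply div_le_div_of_nonneg_right ?_ (by positivity)
    · nlinarith
  have h1 : 3*F^2*(T^2/N^2 + α*(F^2/N^2)) - T^2
      = N^2 * (3*(F^2/N^2)*(T^2/N^2 + α*(F^2/N^2)) - T^2/N^2) := by
    field_simp
  have h2 : F^4 + N^2*(N^2 * (3*(F^2/N^2)*(T^2/N^2 + α*(F^2/N^2)) - T^2/N^2))
      = N^2 * (N^2 * ((F^2/N^2)^2 + (3*(F^2/N^2)*(T^2/N^2 + α*(F^2/N^2)) - T^2/N^2))) := by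
    field_simp
  rw [h1, h2]
  have h3 : (N^2 * (3*(F^2/N^2)*(T^2/N^2 + α*(F^2/N^2)) - T^2/N^2))^2
      = N^2 * (N^2 * (3*(F^2/N^2)*(T^2/N^2 + α*(F^2/N^2)) - T^2/N^2)^2) := by ring
  rw [h3, mul_div_mul_left _ _ (by positivity : (N:ℝ)^2 ≠ 0),
    mul_div_mul_left _ _ (by positivity : (N:ℝ)^2 ≠ 0)]
  exact key_ineq_aux (T^2/N^2) (F^2/N^2) α hb hab hα

lemma opNorm_le_frob_aux {d : ℕ} (A : Matrix (Fin d) (Fin d) ℝ) : opNorm A ≤ frob A := by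
  unfold opNorm frob
  refine ContinuousLinearMap.opNorm_le_bound _ (Real.sqrt_nonneg _) fun x => ?_
  set v : Fin d → ℝ := (WithLp.equiv 2 (Fin d → ℝ)) x with hv
  have hx : x = (WithLp.equiv 2 (Fin d → ℝ)).symm v := (Equiv.symm_apply_apply _ _).symm
  rw [hx, WithLp.equiv_symm_apply, toEuclideanCLM_toLp]
  rw [EuclideanSpace.norm_eq, EuclideanSpace.norm_eq]
  simp only [Real.norm_eq_abs, sq_abs]
  rw [← Real.sqrt_mul (by positivity)]
  apply Real.sqrt_le_sqrt
  calc ∑ i, (A.mulVec v i)^2 = ∑ i, (∑ j, A i j * v j)^2 := by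
        simp [Matrix.mulVec, dotProduct]
    _ ≤ ∑ i, ((∑ j, (A i j)^2) * (∑ j, (v j)^2)) :=
        Finset.sum_le_sum fun i _ => Finset.sum_mul_sq_le_sq_mul_sq _ _ _
    _ = (∑ i, ∑ j, (A i j)^2) * (∑ j, (v j)^2) := (Finset.sum_mul _ _ _).symm

lemma opNorm_sq_aux {d : ℕ} (Sig : Matrix (Fin d) (Fin d) ℝ) (hSig : Sig.PosSemidef) :
    opNorm (Sig ^ 2) = opNorm Sig ^ 2 := by
  unfold opNorm
  rw [pow_two, _root_.map_mul]
  have hstar : star (toEuclideanCLM (𝕜 := ℝ) Sig) = toEuclideanCLM (𝕜 := ℝ) Sig := by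
    rw [← map_star]
    congr 1
    exact hSig.1
  calc ‖toEuclideanCLM (𝕜 := ℝ) Sig * toEuclideanCLM (𝕜 := ℝ) Sig‖
      = ‖star (toEuclideanCLM (𝕜 := ℝ) Sig) * toEuclideanCLM (𝕜 := ℝ) Sig‖ := by rw [hstar]
    _ = ‖toEuclideanCLM (𝕜 := ℝ) Sig‖ * ‖toEuclideanCLM (𝕜 := ℝ) Sig‖ :=
        CStarRing.norm_star_mul_self (x := toEuclideanCLM (𝕜 := ℝ) Sig)
    _ = ‖toEuclideanCLM (𝕜 := ℝ) Sig‖ ^ 2 := (sq _).symm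

lemma opNorm_pos_aux {d : ℕ} (Sig : Matrix (Fin d) (Fin d) ℝ) (hne : Sig ≠ 0) :
    0 < opNorm Sig := by
  rw [opNorm, norm_pos_iff]
  intro h
  apply hne
  have : Sig = (toEuclideanCLM (𝕜 := ℝ)).symm 0 := by rw [← h]; simp
  simpa using this

lemma trace_sq_eq_aux {d : ℕ} (Sig : Matrix (Fin d) (Fin d) ℝ) (hSig : Sig.PosSemidef) :
    (Sig ^ 2).trace = ∑ i, ∑ j, (Sig i j) ^ 2 := by
  have hsymm : ∀ i j, Sig j i = Sig i j := fun i j => by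
    have := congrFun (congrFun hSig.1 i) j
    simpa [Matrix.conjTranspose_apply] using this
  rw [pow_two]
  simp only [Matrix.trace, Matrix.diag, Matrix.mul_apply]
  refine Finset.sum_congr rfl fun i _ => Finset.sum_congr rfl fun j _ => ?_
  rw [hsymm, pow_two]

lemma frob_sq_aux {d : ℕ} (A : Matrix (Fin d) (Fin d) ℝ) :
    frob A ^ 2 = ∑ i, ∑ j, (A i j) ^ 2 :=
  Real.sq_sqrt (by positivity)

lemma frob_pos_aux {d : ℕ} (Sig : Matrix (Fin d) (Fin d) ℝ) (hne : Sig ≠ 0) :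
    0 < frob Sig := by
  obtain ⟨i, j, hij⟩ : ∃ i j, Sig i j ≠ 0 := by
    by_contra h
    push_neg at h
    exact hne (by ext i j; simpa using h i j)
  apply Real.sqrt_pos.mpr
  have h1 : 0 < ∑ k, (Sig i k) ^ 2 :=
    Finset.sum_pos' (fun k _ => sq_nonneg _) ⟨j, Finset.mem_univ _, by positivity⟩
  exact Finset.sum_pos' (fun k _ => Finset.sum_nonneg fun l _ => sq_nonneg _)
    ⟨i, Finset.mem_univ _, h1⟩

lemma frob_le_trace_aux {d : ℕ} (Sig : Matrix (Fin d) (Fin d) ℝ) (hSig : Sig.PosSemidef) :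
    frob Sig ≤ Sig.trace := by
  obtain ⟨B, hB⟩ : ∃ B : Matrix (Fin d) (Fin d) ℝ, Sig = Bᴴ * B := by
    open scoped MatrixOrder in
    exact CStarAlgebra.nonneg_iff_eq_star_mul_self.mp hSig.nonneg
  have hentry : ∀ i j, Sig i j = ∑ k, B k i * B k j := fun i j => by
    rw [hB]; simp [Matrix.mul_apply, Matrix.conjTranspose_apply]
  have hdiag : ∀ i, 0 ≤ Sig i i := fun i => by
    rw [hentry]
    exact Finset.sum_nonneg fun k _ => mul_self_nonneg _
  have hCS : ∀ i j, (Sig i j) ^ 2 ≤ Sig i i * Sig j j := fun i j => by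
    rw [hentry i j, hentry i i, hentry j j]
    have := Finset.sum_mul_sq_le_sq_mul_sq Finset.univ (fun k => B k i) (fun k => B k j)
    simpa only [pow_two] using this
  have htr : 0 ≤ Sig.trace := Finset.sum_nonneg fun i _ => hdiag i
  have hF2 : frob Sig ^ 2 ≤ Sig.trace ^ 2 := by
    rw [frob_sq_aux]
    calc ∑ i, ∑ j, (Sig i j) ^ 2 ≤ ∑ i, ∑ j, Sig i i * Sig j j :=
          Finset.sum_le_sum fun i _ => Finset.sum_le_sum fun j _ => hCS i j
      _ = (∑ i, Sig i i) * (∑ j, Sig j j) := by rw [Finset.sum_mul_sum]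
      _ = Sig.trace ^ 2 := by rw [Matrix.trace]; simp [Matrix.diag, pow_two]
  nlinarith [Real.sqrt_nonneg (∑ i, ∑ j, (Sig i j) ^ 2), frob_sq_aux Sig,
    (Real.sqrt_nonneg (∑ i, ∑ j, (Sig i j) ^ 2) : 0 ≤ frob Sig)]

/-- Lemma on `ρ`: with `ρ² = 3‖Σ‖_F²(r(Σ)² + α r(Σ²))`, a lower bound on
`min{2ρ²/‖Σ‖_F², (ρ² - (Tr Σ)²)²/(‖Σ‖_F⁴ + ‖Σ‖²(ρ² - (Tr Σ)²))}`. -/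
theorem statement12 {d : ℕ} (Sig : Matrix (Fin d) (Fin d) ℝ)
    (hSig : Sig.PosSemidef) (hne : Sig ≠ 0)
    (α : ℝ) (hα : 0 < α) (ρsq : ℝ)
    (hρ : ρsq = 3 * frob Sig ^ 2 * (effRank Sig ^ 2 + α * effRank (Sig ^ 2))) :
    effRank Sig ^ 2 + (α - 1) * effRank (Sig ^ 2) ≤
      min (2 * ρsq / frob Sig ^ 2)
        ((ρsq - Sig.trace ^ 2) ^ 2 /
          (frob Sig ^ 4 + opNorm Sig ^ 2 * (ρsq - Sig.trace ^ 2))) := by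
  have hN0 : 0 < opNorm Sig := opNorm_pos_aux Sig hne
  have hF0 : 0 < frob Sig := frob_pos_aux Sig hne
  have hNF : opNorm Sig ≤ frob Sig := opNorm_le_frob_aux Sig
  have hFT : frob Sig ≤ Sig.trace := frob_le_trace_aux Sig hSig
  have hN2 : opNorm (Sig ^ 2) = opNorm Sig ^ 2 := opNorm_sq_aux Sig hSig
  have hTr2 : (Sig ^ 2).trace = frob Sig ^ 2 := by
    rw [trace_sq_eq_aux Sig hSig, ← frob_sq_aux]
  subst hρ
  unfold effRank
  rw [hN2, hTr2, div_pow]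
  set N := opNorm Sig with hN
  set F := frob Sig with hF
  set T := Sig.trace with hT
  refine le_min ?_ ?_
  · have e3 : 2 * (3*F^2*(T^2/N^2 + α*(F^2/N^2))) / F^2
        = 6*(T^2/N^2) + 6*(α*(F^2/N^2)) := by
      field_simp
      ring
    rw [e3]
    have h1 : (0:ℝ) ≤ T^2/N^2 := by positivity
    have h2 : (0:ℝ) ≤ F^2/N^2 := by positivity
    nlinarith [mul_nonneg hα.le h2]
  · exact lift_ineq_aux N F T α hN0 hF0 hNF hFT hα
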